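/- Let (X,d) be a non-connected Robinson space with d(x,y) > 0 for all distinct x,y ∈ X. Let C_1,…,C_k be the connected components of G_{<δ*}, and let I := {i ∈ {1,…,k} : C_i is not a connected component of G_{δ*}}. Then |I| ≠ 1. Moreover, if I ≠ ∅, then: S_0 := ∪_{i∈I} C_i is a connected component of G_{δ*} with diam(S_0) > δ*; the maximal mmodules of (X,d) are exactly the sets X ∖ C_j for j ∉ I together with X ∖ S_0; and the graph H with vertex set I and an edge between distinct i,i' whenever there exist x ∈ C_i and y ∈ C_{i'} with d(x,y) > δ*, is connected and bipartite. -/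

import Mathlib

structure Dissim (X : Type*) where
  d : X → X → ℝ
  symm : ∀ x y, d x y = d y x
  nonneg : ∀ x y, 0 ≤ d x y
  self : ∀ x, d x x = 0

variable {X : Type*}

def Compatible (D : Dissim X) (lt : X → X → Prop) : Prop :=
  ∀ x y z : X, lt x y → lt y z → D.d x y ≤ D.d x z ∧ D.d y z ≤ D.d x z

def IsCompatOrder (D : Dissim X) (lt : X → X → Prop) : Prop :=
  IsStrictTotalOrder X lt ∧ Compatible D lt

def Robinson (D : Dissim X) : Prop :=
  ∃ lt : X → X → Prop, IsCompatOrder D lt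

def IsMmodule (D : Dissim X) (M : Set X) : Prop :=
  ∀ z ∉ M, ∀ x ∈ M, ∀ y ∈ M, D.d z x = D.d z y

def IsInterval (lt : X → X → Prop) (I : Set X) : Prop :=
  ∀ a b c : X, lt a b → lt b c → a ∈ I → c ∈ I → b ∈ I

def IsBlock (D : Dissim X) (Y : Set X) : Prop :=
  ∀ lt : X → X → Prop, IsCompatOrder D lt → IsInterval lt Y

noncomputable def diam (D : Dissim X) (Y : Set X) : ℝ :=
  sSup (Set.image2 D.d Y Y)

def Gdelta (D : Dissim X) (δ : ℝ) : SimpleGraph X where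
  Adj x y := x ≠ y ∧ D.d x y ≠ δ
  symm := by
    constructor
    rintro x y ⟨hxy, hd⟩
    exact ⟨hxy.symm, by rw [D.symm]; exact hd⟩
  loopless := by constructor; rintro x ⟨h, -⟩; exact h rfl

def Gle (D : Dissim X) (δ : ℝ) : SimpleGraph X where
  Adj x y := x ≠ y ∧ D.d x y ≤ δ
  symm := by
    constructor
    rintro x y ⟨hxy, hd⟩
    exact ⟨hxy.symm, by rw [D.symm]; exact hd⟩
  loopless := by constructor; rintro x ⟨h, -⟩; exact h rfl

def Glt (D : Dissim X) (δ : ℝ) : SimpleGraph X where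
  Adj x y := x ≠ y ∧ D.d x y < δ
  symm := by
    constructor
    rintro x y ⟨hxy, hd⟩
    exact ⟨hxy.symm, by rw [D.symm]; exact hd⟩
  loopless := by constructor; rintro x ⟨h, -⟩; exact h rfl

def IsCompOf {V : Type*} (G : SimpleGraph V) (C : Set V) : Prop :=
  ∃ x : V, C = {y | G.Reachable x y}

def MMax (D : Dissim X) : Set (Set X) :=
  {M | IsMmodule D M ∧ M ≠ Set.univ ∧
    ∀ M' : Set X, IsMmodule D M' → M' ≠ Set.univ → M ⊆ M' → M = M'}

def IsPartition {α : Type*} (P : Set (Set α)) : Prop :=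
  (∀ A ∈ P, A.Nonempty) ∧
  (∀ A ∈ P, ∀ B ∈ P, A ≠ B → Disjoint A B) ∧
  ⋃₀ P = Set.univ

def IsCopartition {α : Type*} (P : Set (Set α)) : Prop :=
  IsPartition ((fun M => Mᶜ) '' P)

def SimpleGraph.restrictTo {V : Type*} (G : SimpleGraph V) (S : Set V) : SimpleGraph V where
  Adj x y := x ∈ S ∧ y ∈ S ∧ G.Adj x y
  symm := by constructor; rintro x y ⟨hx, hy, h⟩; exact ⟨hy, hx, h.symm⟩
  loopless := by constructor; rintro x ⟨-, -, h⟩; exact G.loopless.irrefl x h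

def ConnectedWithin {V : Type*} (G : SimpleGraph V) (S : Set V) : Prop :=
  S.Nonempty ∧ ∀ x ∈ S, ∀ y ∈ S, (G.restrictTo S).Reachable x y

def IsCompWithin {V : Type*} (G : SimpleGraph V) (S : Set V) (C : Set V) : Prop :=
  ∃ x ∈ S, C = {y | (G.restrictTo S).Reachable x y}

def IsStrictTotalOrderOn {α : Type*} (S : Set α) (lt : α → α → Prop) : Prop :=
  (∀ x ∈ S, ¬ lt x x) ∧
  (∀ x ∈ S, ∀ y ∈ S, ∀ z ∈ S, lt x y → lt y z → lt x z) ∧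
  (∀ x ∈ S, ∀ y ∈ S, x ≠ y → (lt x y ∨ lt y x) ∧ ¬ (lt x y ∧ lt y x))

def CompatibleOn (D : Dissim X) (S : Set X) (lt : X → X → Prop) : Prop :=
  ∀ x ∈ S, ∀ y ∈ S, ∀ z ∈ S, lt x y → lt y z → D.d x y ≤ D.d x z ∧ D.d y z ≤ D.d x z

def IsCompatOrderOn (D : Dissim X) (S : Set X) (lt : X → X → Prop) : Prop :=
  IsStrictTotalOrderOn S lt ∧ CompatibleOn D S lt

def FlatOn (D : Dissim X) (S : Set X) : Prop :=
  ∃ lt : X → X → Prop, IsCompatOrderOn D S lt ∧ (∃ x ∈ S, ∃ y ∈ S, lt x y) ∧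
    ∀ lt' : X → X → Prop, IsCompatOrderOn D S lt' →
      (∀ x ∈ S, ∀ y ∈ S, (lt' x y ↔ lt x y)) ∨ (∀ x ∈ S, ∀ y ∈ S, (lt' x y ↔ lt y x))

def Flat (D : Dissim X) : Prop :=
  ∃ lt : X → X → Prop, IsCompatOrder D lt ∧ (∃ x y : X, lt x y) ∧
    ∀ lt' : X → X → Prop, IsCompatOrder D lt' →
      (∀ x y : X, lt' x y ↔ lt x y) ∨ (∀ x y : X, lt' x y ↔ lt y x)

def IsCopointAt (D : Dissim X) (p : X) (C : Set X) : Prop :=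
  IsMmodule D C ∧ C.Nonempty ∧ p ∉ C ∧
  ∀ C' : Set X, IsMmodule D C' → p ∉ C' → C ⊆ C' → C = C'

def bigGraph (D : Dissim X) (δ : ℝ) (I : Set (Set X)) : SimpleGraph (Set X) where
  Adj C C' := C ∈ I ∧ C' ∈ I ∧ C ≠ C' ∧ ∃ x ∈ C, ∃ y ∈ C', δ < D.d x y
  symm := by
    constructor
    rintro C C' ⟨hC, hC', hne, x, hx, y, hy, hd⟩
    exact ⟨hC', hC, hne.symm, y, hy, x, hx, by rw [D.symm]; exact hd⟩
  loopless := by constructor; rintro C ⟨-, -, hne, -⟩; exact hne rfl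

section Aux15

variable {X : Type*}

lemma sto_trans {lt : X → X → Prop} (hst : IsStrictTotalOrder X lt) {a b c : X}
    (h1 : lt a b) (h2 : lt b c) : lt a c :=
  hst.toIsStrictOrder.toIsTrans.trans a b c h1 h2

lemma sto_irrefl {lt : X → X → Prop} (hst : IsStrictTotalOrder X lt) (a : X) : ¬ lt a a :=
  by haveI := hst; exact irrefl a

lemma sto_asymm {lt : X → X → Prop} (hst : IsStrictTotalOrder X lt) {a b : X}
    (h1 : lt a b) (h2 : lt b a) : False :=
  sto_irrefl hst a (sto_trans hst h1 h2)

lemma sto_tri {lt : X → X → Prop} (hst : IsStrictTotalOrder X lt) (a b : X) :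
    lt a b ∨ a = b ∨ lt b a :=
  by haveI := hst; exact trichotomous a b

lemma sto_ne {lt : X → X → Prop} (hst : IsStrictTotalOrder X lt) {a b : X}
    (h : lt a b) : a ≠ b :=
  fun he => sto_irrefl hst b (he ▸ h)

lemma d_mono {D : Dissim X} {lt : X → X → Prop} (hc : Compatible D lt)
    (hst : IsStrictTotalOrder X lt) {a x y b : X}
    (hax : a = x ∨ lt a x) (hxy : lt x y) (hyb : b = y ∨ lt y b) :
    D.d x y ≤ D.d a b := by
  rcases hax with rfl | hax
  · rcases hyb with rfl | hyb
    · exact le_refl _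
    · exact (hc a y b hxy hyb).1
  · rcases hyb with rfl | hyb
    · exact (hc a x b hax hxy).2
    · exact le_trans (hc x y b hxy hyb).1 (hc a x b hax (sto_trans hst hxy hyb)).2

lemma btwAux {D : Dissim X} {lt : X → X → Prop} (hst : IsStrictTotalOrder X lt)
    (hc : Compatible D lt) {δ : ℝ} {x y : X} (w : (Glt D δ).Walk x y) :
    ∀ z, lt x z → lt z y → (Glt D δ).Reachable x z := by
  induction w with
  | nil => exact fun z h1 h2 => absurd (sto_trans hst h1 h2) (sto_irrefl hst _)
  | @cons a b c hab p ih =>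
    intro z h1 h2
    rcases sto_tri hst z b with hzb | rfl | hbz
    · rcases sto_tri hst a b with hab' | rfl | hba
      · exact SimpleGraph.Adj.reachable
          ⟨sto_ne hst h1, lt_of_le_of_lt (hc a z b h1 hzb).1 hab.2⟩
      · exact absurd rfl hab.1
      · exact absurd (sto_trans hst hba h1) (fun h => sto_asymm hst h hzb)
    · exact hab.reachable
    · exact hab.reachable.trans (ih z hbz h2)

lemma reach_mono' {V : Type*} {G H : SimpleGraph V}
    (hGH : ∀ a b, G.Adj a b → H.Adj a b) {x y : V} (w : G.Walk x y) :
    H.Reachable x y := by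
  induction w with
  | nil => exact SimpleGraph.Reachable.refl _
  | @cons a b c hab p ih => exact (hGH _ _ hab).reachable.trans ih

lemma crossWalk {V : Type*} {G : SimpleGraph V} {S : Set V} {u v : V} (w : G.Walk u v) :
    u ∈ S → v ∉ S → ∃ a ∈ S, ∃ b, b ∉ S ∧ G.Adj a b ∧ G.Reachable u a := by
  induction w with
  | nil => exact fun hu hv => absurd hu hv
  | @cons a b c hab p ih =>
    intro hu hv
    by_cases hb : b ∈ S
    · obtain ⟨a', ha', b', hb', hadj, hr⟩ := ih hb hv
      exact ⟨a', ha', b', hb', hadj, hab.reachable.trans hr⟩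
    · exact ⟨a, hu, b, hb, hab, SimpleGraph.Reachable.refl a⟩

lemma reachSet_eq {V : Type*} {G : SimpleGraph V} {x y : V} (h : G.Reachable x y) :
    {w | G.Reachable x w} = {w | G.Reachable y w} := by
  ext w; exact ⟨fun hw => h.symm.trans hw, fun hw => h.trans hw⟩

lemma comp_shared {V : Type*} {G : SimpleGraph V} {C K : Set V}
    (hC : IsCompOf G C) (hK : IsCompOf G K) {x : V} (hxC : x ∈ C) (hxK : x ∈ K) : C = K := by
  obtain ⟨p, rfl⟩ := hC; obtain ⟨q, rfl⟩ := hK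
  rw [reachSet_eq (hxC : G.Reachable p x), reachSet_eq (hxK : G.Reachable q x)]

lemma fin_min {X : Type*} {lt : X → X → Prop}
    (htri : ∀ a b : X, a ≠ b → lt a b ∨ lt b a)
    (htr : ∀ {a b c : X}, lt a b → lt b c → lt a c)
    (S : Finset X) (hne : S.Nonempty) : ∃ m ∈ S, ∀ y ∈ S, y ≠ m → lt m y := by
  classical
  induction S using Finset.induction_on with
  | empty => simp at hne
  | @insert a s hans ih =>
    by_cases hs : s.Nonempty
    · obtain ⟨m, hm, hmin⟩ := ih hs
      have ham : a ≠ m := fun h => hans (h ▸ hm)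
      rcases htri a m ham with h | h
      · refine ⟨a, Finset.mem_insert_self a s, ?_⟩
        intro y hy hya
        rcases Finset.mem_insert.mp hy with rfl | hy'
        · exact absurd rfl hya
        · by_cases hym : y = m
          · exact hym ▸ h
          · exact htr h (hmin y hy' hym)
      · refine ⟨m, Finset.mem_insert_of_mem hm, ?_⟩
        intro y hy hym
        rcases Finset.mem_insert.mp hy with rfl | hy'
        · exact h
        · exact hmin y hy' hym
    · refine ⟨a, Finset.mem_insert_self a s, ?_⟩
      intro y hy hya
      rcases Finset.mem_insert.mp hy with rfl | hy'
      · exact absurd rfl hya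
      · exact absurd ⟨y, hy'⟩ hs

lemma set_min {X : Type*} [Fintype X] {lt : X → X → Prop}
    (hst : IsStrictTotalOrder X lt) (S : Set X) (hne : S.Nonempty) :
    ∃ m ∈ S, ∀ y ∈ S, y ≠ m → lt m y := by
  classical
  have htri : ∀ a b : X, a ≠ b → lt a b ∨ lt b a := by
    intro a b hab
    rcases sto_tri hst a b with h | rfl | h
    · exact Or.inl h
    · exact absurd rfl hab
    · exact Or.inr h
  obtain ⟨m, hm, hmin⟩ := fin_min htri (fun h1 h2 => sto_trans hst h1 h2) S.toFinset
    (by obtain ⟨x, hx⟩ := hne; exact ⟨x, Set.mem_toFinset.mpr hx⟩)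
  exact ⟨m, Set.mem_toFinset.mp hm, fun y hy => hmin y (Set.mem_toFinset.mpr hy)⟩

lemma liftWalk {X : Type*} {D : Dissim X} {δ : ℝ} {I : Set (Set X)} (hδ : 0 < δ)
    (hcomp : ∀ C ∈ I, ∀ a ∈ C, ∀ b ∈ C, (Gdelta D δ).Reachable a b)
    {C C' : Set X} (w : ((bigGraph D δ I).restrictTo I).Walk C C') :
    C ∈ I → ∀ x ∈ C, ∀ y ∈ C', (Gdelta D δ).Reachable x y := by
  induction w with
  | nil => exact fun hC x hx y hy => hcomp _ hC _ hx _ hy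
  | @cons A B C'' hAB p ih =>
    intro hA x hx y hy
    obtain ⟨-, hB, -, -, -, a, ha, b, hb, hd⟩ := hAB
    have hab : a ≠ b := by rintro rfl; rw [D.self] at hd; linarith
    have hadj : (Gdelta D δ).Adj a b := ⟨hab, hd.ne'⟩
    exact ((hcomp _ hA _ hx _ ha).trans hadj.reachable).trans (ih hB b hb y hy)

end Aux15

/-- let I be the set of components of G_{<δ*} that are not components
of G_{δ*}. Then |I| ≠ 1 and, when I is nonempty, S₀ := ⋃ I is a component of
G_{δ*} of diameter > δ*, the maximal mmodules are the complements of the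
components of G_{<δ*} outside I together with the complement of S₀, and the
graph H on I (with edges between components containing points at distance > δ*)
is connected and bipartite. -/
theorem stmt15 [Fintype X] [Nonempty X] (D : Dissim X)
    (hpos : ∀ x y : X, x ≠ y → 0 < D.d x y)
    (hRob : Robinson D)
    (δstar : ℝ)
    (hls : IsLeast {δ : ℝ | 0 < δ ∧ (Gle D δ).Connected} δstar)
    (hnc : ¬ (Gdelta D δstar).Connected)
    (I : Set (Set X))
    (hI : I = {C : Set X | IsCompOf (Glt D δstar) C ∧ ¬ IsCompOf (Gdelta D δstar) C}) :
    I.ncard ≠ 1 ∧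
    (I.Nonempty →
      (IsCompOf (Gdelta D δstar) (⋃₀ I) ∧ δstar < diam D (⋃₀ I)) ∧
      MMax D =
        ((fun C : Set X => Cᶜ) '' ({C : Set X | IsCompOf (Glt D δstar) C} \ I)) ∪
          {(⋃₀ I)ᶜ} ∧
      ConnectedWithin (bigGraph D δstar I) I ∧
      ∃ A B : Set (Set X), A ∪ B = I ∧ Disjoint A B ∧
        (∀ C ∈ A, ∀ C' ∈ A, ¬ (bigGraph D δstar I).Adj C C') ∧
        (∀ C ∈ B, ∀ C' ∈ B, ¬ (bigGraph D δstar I).Adj C C')) := by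
  classical
  obtain ⟨lt, hst, hc⟩ := hRob
  have hImem : ∀ C : Set X, C ∈ I ↔
      (IsCompOf (Glt D δstar) C ∧ ¬ IsCompOf (Gdelta D δstar) C) := by
    intro C; rw [hI]; exact Iff.rfl
  have hδpos : (0:ℝ) < δstar := hls.1.1
  -- disconnection witnesses
  obtain ⟨u, v, huv⟩ : ∃ u v : X, ¬ (Gdelta D δstar).Reachable u v := by
    by_contra h
    push_neg at h
    exact hnc ⟨fun a b => h a b⟩
  -- basic tools
  have hmono : ∀ {x y : X}, (Glt D δstar).Reachable x y → (Gdelta D δstar).Reachable x y := by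
    intro x y h
    obtain ⟨w⟩ := h
    exact reach_mono' (G := Glt D δstar) (H := Gdelta D δstar) (fun a b hab => ⟨hab.1, ne_of_lt hab.2⟩) w
  have hreach' : ∀ C : Set X, IsCompOf (Glt D δstar) C →
      ∀ a ∈ C, ∀ b ∈ C, (Glt D δstar).Reachable a b := by
    rintro C ⟨x₀, rfl⟩ a ha b hb
    exact (ha : (Glt D δstar).Reachable x₀ a).symm.trans hb
  have hsep : ∀ x y : X, ¬ (Glt D δstar).Reachable x y → x ≠ y → δstar ≤ D.d x y := by
    intro x y hr hne
    by_contra h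
    push_neg at h
    exact hr (SimpleGraph.Adj.reachable ⟨hne, h⟩)
  have hcross : ∀ p q : X,
      ¬ ((Gdelta D δstar).Reachable u p ↔ (Gdelta D δstar).Reachable u q) →
      D.d p q = δstar := by
    intro p q hpq
    have hne : p ≠ q := by rintro rfl; exact hpq Iff.rfl
    by_contra h
    have hadj : (Gdelta D δstar).Adj p q := ⟨hne, h⟩
    exact hpq ⟨fun hr => hr.trans hadj.reachable, fun hr => hr.trans hadj.symm.reachable⟩
  have hbtw : ∀ x y z : X, (Glt D δstar).Reachable x y → lt x z → lt z y →
      (Glt D δstar).Reachable x z := by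
    intro x y z h h1 h2
    obtain ⟨w⟩ := h
    exact btwAux hst hc w z h1 h2
  have hint : ∀ C : Set X, IsCompOf (Glt D δstar) C →
      ∀ a ∈ C, ∀ b ∈ C, ∀ z, lt a z → lt z b → z ∈ C := by
    rintro C hC a ha b hb z h1 h2
    obtain ⟨x₀, rfl⟩ := hC
    exact (ha : (Glt D δstar).Reachable x₀ a).trans (hbtw a b z (hreach' _ ⟨x₀, rfl⟩ a ha b hb) h1 h2)
  have houtK : ∀ K : Set X, IsCompOf (Gdelta D δstar) K →
      ∀ p ∈ K, ∀ q, q ∉ K → D.d p q = δstar := by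
    rintro K ⟨z₀, rfl⟩ p hp q hq
    have hne : p ≠ q := by rintro rfl; exact hq hp
    by_contra h
    exact hq ((hp : (Gdelta D δstar).Reachable z₀ p).trans (SimpleGraph.Adj.reachable ⟨hne, h⟩))
  -- witness extraction
  have hwit : ∀ C, C ∈ I →
      ∃ a ∈ C, ∃ b, b ∉ C ∧ δstar < D.d a b ∧
        {w | (Glt D δstar).Reachable b w} ∈ I := by
    intro C hCI0
    obtain ⟨hClt, hCnd⟩ := (hImem C).mp hCI0
    obtain ⟨x₀, rfl⟩ := hClt
    obtain ⟨y, hyK, hyC⟩ : ∃ y, (Gdelta D δstar).Reachable x₀ y ∧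
        y ∉ {w | (Glt D δstar).Reachable x₀ w} := by
      by_contra h
      push_neg at h
      refine hCnd ⟨x₀, Set.Subset.antisymm (fun t ht => hmono ht) (fun t ht => h t ht)⟩
    obtain ⟨w⟩ := hyK
    obtain ⟨a, ha, b, hb, hadj, -⟩ := crossWalk (S := {w | (Glt D δstar).Reachable x₀ w}) w
      (show (Glt D δstar).Reachable x₀ x₀ from SimpleGraph.Reachable.refl x₀) hyC
    have ha' : (Glt D δstar).Reachable x₀ a := ha
    have hnr : ¬ (Glt D δstar).Reachable a b := fun h => hb (ha'.trans h)
    have hdab : δstar < D.d a b := lt_of_le_of_ne (hsep a b hnr hadj.1) (Ne.symm hadj.2)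
    refine ⟨a, ha, b, hb, hdab, (hImem _).mpr ⟨⟨b, rfl⟩, ?_⟩⟩
    rintro ⟨z, hz⟩
    have hbz : (Gdelta D δstar).Reachable z b := by
      have hb0 : b ∈ {w | (Glt D δstar).Reachable b w} :=
        show (Glt D δstar).Reachable b b from SimpleGraph.Reachable.refl b
      rw [hz] at hb0; exact hb0
    have haz : a ∈ {w | (Glt D δstar).Reachable b w} := by
      rw [hz]; exact hbz.trans hadj.symm.reachable
    have haz' : (Glt D δstar).Reachable b a := haz
    exact hb (ha'.trans haz'.symm)
  constructor
  · -- ncard ≠ 1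
    intro h1
    obtain ⟨C, hC⟩ := Set.ncard_eq_one.mp h1
    have hCin : C ∈ I := by rw [hC]; exact rfl
    obtain ⟨a, ha, b, hb, hd, hbI⟩ := hwit C hCin
    rw [hC, Set.mem_singleton_iff] at hbI
    exact hb (hbI ▸ (SimpleGraph.Reachable.refl b : b ∈ {w | (Glt D δstar).Reachable b w}))
  · intro hIne
        -- ====== PART 2 ======
    have hS₀ne : (⋃₀ I).Nonempty := by
      obtain ⟨C, hC⟩ := hIne
      obtain ⟨a, ha, -⟩ := hwit C hC
      exact ⟨a, C, hC, ha⟩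
    have hstf : IsStrictTotalOrder X (fun a b => lt b a) :=
      { trichotomous := fun a b h1 h2 => by
          rcases sto_tri hst a b with h | h | h
          exacts [absurd h h2, h, absurd h h1],
        irrefl := fun a => sto_irrefl hst a,
        trans := fun a b c h1 h2 => sto_trans hst h2 h1 }
    obtain ⟨m, hmS, hmmin⟩ := set_min hst _ hS₀ne
    obtain ⟨M, hMS, hMtop0⟩ := set_min hstf _ hS₀ne
    have hMtop : ∀ y ∈ ⋃₀ I, y ≠ M → lt y M := fun y hy hne => hMtop0 y hy hne
    have hCmI : {w | (Glt D δstar).Reachable m w} ∈ I := by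
      obtain ⟨C, hC, hmC⟩ := hmS
      have heq : {w | (Glt D δstar).Reachable m w} = C :=
        comp_shared ⟨m, rfl⟩ ((hImem C).mp hC).1
          (show (Glt D δstar).Reachable m m from SimpleGraph.Reachable.refl m) hmC
      rw [heq]; exact hC
    have hCMI : {w | (Glt D δstar).Reachable M w} ∈ I := by
      obtain ⟨C, hC, hMC⟩ := hMS
      have heq : {w | (Glt D δstar).Reachable M w} = C :=
        comp_shared ⟨M, rfl⟩ ((hImem C).mp hC).1
          (show (Glt D δstar).Reachable M M from SimpleGraph.Reachable.refl M) hMC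
      rw [heq]; exact hC
    have hS₀min : ∀ y ∈ ⋃₀ I, y = m ∨ lt m y := by
      intro y hy
      by_cases h : y = m
      · exact Or.inl h
      · exact Or.inr (hmmin y hy h)
    have hS₀max : ∀ y ∈ ⋃₀ I, y = M ∨ lt y M := by
      intro y hy
      by_cases h : y = M
      · exact Or.inl h
      · exact Or.inr (hMtop y hy h)
    -- the two key H-edges
    have hE1 : ∀ C ∈ I, (bigGraph D δstar I).Adj C {w | (Glt D δstar).Reachable M w} ∨
        (bigGraph D δstar I).Adj C {w | (Glt D δstar).Reachable m w} := by
      intro C hC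
      have hClt : IsCompOf (Glt D δstar) C := ((hImem C).mp hC).1
      obtain ⟨a, ha, b, hb, hdab, hCbI⟩ := hwit C hC
      have hbS : b ∈ ⋃₀ I := ⟨_, hCbI, show (Glt D δstar).Reachable b b from
        SimpleGraph.Reachable.refl b⟩
      have hanb : a ≠ b := fun h => hb (h ▸ ha)
      rcases sto_tri hst a b with hab | heq | hba
      · left
        have hMC : M ∉ C := by
          intro hMC
          rcases hS₀max b hbS with heq | hbM
          · exact hb (heq ▸ hMC)
          · exact hb (hint C hClt a ha M hMC b hab hbM)
        have hdaM : δstar < D.d a M := by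
          rcases hS₀max b hbS with heq | hbM
          · exact heq ▸ hdab
          · exact lt_of_lt_of_le hdab (d_mono hc hst (Or.inl rfl) hab (Or.inr hbM))
        have hne : C ≠ {w | (Glt D δstar).Reachable M w} := by
          intro h
          exact hMC (h ▸ (show (Glt D δstar).Reachable M M from SimpleGraph.Reachable.refl M))
        exact ⟨hC, hCMI, hne, a, ha, M,
          show (Glt D δstar).Reachable M M from SimpleGraph.Reachable.refl M, hdaM⟩
      · exact absurd heq hanb
      · right
        have hmC : m ∉ C := by
          intro hmC
          rcases hS₀min b hbS with heq | hmb
          · exact hb (heq ▸ hmC)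
          · exact hb (hint C hClt m hmC a ha b hmb hba)
        have hdam : δstar < D.d a m := by
          rcases hS₀min b hbS with heq | hmb
          · exact heq ▸ hdab
          · have h1 : D.d b a ≤ D.d m a := d_mono hc hst (Or.inr hmb) hba (Or.inl rfl)
            have h2 : D.d a b = D.d b a := D.symm a b
            have h3 : D.d m a = D.d a m := D.symm m a
            linarith
        have hne : C ≠ {w | (Glt D δstar).Reachable m w} := by
          intro h
          exact hmC (h ▸ (show (Glt D δstar).Reachable m m from SimpleGraph.Reachable.refl m))
        exact ⟨hC, hCmI, hne, a, ha, m,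
          show (Glt D δstar).Reachable m m from SimpleGraph.Reachable.refl m, hdam⟩
    have hCmM : (bigGraph D δstar I).Adj {w | (Glt D δstar).Reachable m w}
        {w | (Glt D δstar).Reachable M w} := by
      rcases hE1 _ hCmI with h | h
      · exact h
      · exact absurd rfl h.2.2.1
    have hstep : ∀ {C C' : Set X}, (bigGraph D δstar I).Adj C C' →
        ((bigGraph D δstar I).restrictTo I).Reachable C C' :=
      fun h => SimpleGraph.Adj.reachable ⟨h.1, h.2.1, h⟩
    have hRm : ∀ C ∈ I, ((bigGraph D δstar I).restrictTo I).Reachable C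
        {w | (Glt D δstar).Reachable m w} := by
      intro C hC
      rcases hE1 C hC with h | h
      · exact (hstep h).trans (hstep hCmM.symm)
      · exact hstep h
    have hreachBig : ∀ C ∈ I, ∀ C' ∈ I,
        ((bigGraph D δstar I).restrictTo I).Reachable C C' :=
      fun C hC C' hC' => (hRm C hC).trans (hRm C' hC').symm
    have hcompGd : ∀ C ∈ I, ∀ a ∈ C, ∀ b ∈ C, (Gdelta D δstar).Reachable a b :=
      fun C hC a ha b hb => hmono (hreach' C ((hImem C).mp hC).1 a ha b hb)
    have hlift : ∀ C ∈ I, ∀ C' ∈ I, ∀ x ∈ C, ∀ y ∈ C',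
        (Gdelta D δstar).Reachable x y := by
      intro C hC C' hC' x hx y hy
      obtain ⟨w⟩ := hreachBig C hC C' hC'
      exact liftWalk hδpos hcompGd w hC x hx y hy
    -- S₀ is a component of G_δ*
    have hS₀comp : IsCompOf (Gdelta D δstar) (⋃₀ I) := by
      refine ⟨m, ?_⟩
      ext y
      constructor
      · rintro ⟨C, hC, hyC⟩
        exact hlift _ hCmI _ hC m (show (Glt D δstar).Reachable m m from
          SimpleGraph.Reachable.refl m) y hyC
      · intro hy
        have hy' : (Gdelta D δstar).Reachable m y := hy
        by_cases hyI : {w | (Glt D δstar).Reachable y w} ∈ I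
        · exact ⟨_, hyI, show (Glt D δstar).Reachable y y from SimpleGraph.Reachable.refl y⟩
        · exfalso
          have hyd : IsCompOf (Gdelta D δstar) {w | (Glt D δstar).Reachable y w} := by
            by_contra h
            exact hyI ((hImem _).mpr ⟨⟨y, rfl⟩, h⟩)
          obtain ⟨z, hz⟩ := hyd
          have h1 : (Gdelta D δstar).Reachable z y := by
            have hy0 : y ∈ {w | (Glt D δstar).Reachable y w} :=
              show (Glt D δstar).Reachable y y from SimpleGraph.Reachable.refl y
            rw [hz] at hy0; exact hy0
          have h2 : m ∈ {w | (Glt D δstar).Reachable y w} := by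
            rw [hz]; exact h1.trans hy'.symm
          have h3 : (Glt D δstar).Reachable y m := h2
          have heq : {w | (Glt D δstar).Reachable m w} = {w | (Glt D δstar).Reachable y w} :=
            comp_shared ⟨m, rfl⟩ ⟨y, rfl⟩
              (show (Glt D δstar).Reachable m m from SimpleGraph.Reachable.refl m) h3
          exact hyI (heq ▸ hCmI)
    -- diameter
    have hdiam : δstar < diam D (⋃₀ I) := by
      obtain ⟨a, ha, b, hb, hdab, hCbI⟩ := hwit _ hCmI
      have haS : a ∈ ⋃₀ I := ⟨_, hCmI, ha⟩
      have hbS : b ∈ ⋃₀ I := ⟨_, hCbI, show (Glt D δstar).Reachable b b from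
        SimpleGraph.Reachable.refl b⟩
      have hmem : D.d a b ∈ Set.image2 D.d (⋃₀ I) (⋃₀ I) := Set.mem_image2_of_mem haS hbS
      have hbdd : BddAbove (Set.image2 D.d (⋃₀ I) (⋃₀ I)) := (Set.toFinite _).bddAbove
      exact lt_of_lt_of_le hdab (le_csSup hbdd hmem)
    -- maximal mmodules
    have hKmax : ∀ K : Set X, IsCompOf (Gdelta D δstar) K → Kᶜ ∈ MMax D := by
      intro K hK
      have hKmm : IsMmodule D Kᶜ := by
        intro z hz x hx y hy
        have hzK : z ∈ K := Set.notMem_compl_iff.mp hz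
        rw [houtK K hK z hzK x hx, houtK K hK z hzK y hy]
      have hKcne : Kᶜ ≠ Set.univ := by
        obtain ⟨z₀, hz₀⟩ := id hK
        intro h
        have hz₀K : z₀ ∈ K := by
          rw [hz₀]; exact SimpleGraph.Reachable.refl z₀
        have : z₀ ∈ Kᶜ := h ▸ Set.mem_univ z₀
        exact this hz₀K
      refine ⟨hKmm, hKcne, ?_⟩
      intro M' hM' hM'ne hsub
      obtain ⟨w, hw⟩ := (Set.ne_univ_iff_exists_notMem M').mp hM'ne
      have hwK : w ∈ K := by
        by_contra h
        exact hw (hsub h)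
      have hy₀ : ∃ y₀, y₀ ∉ K := by
        by_contra h
        push_neg at h
        obtain ⟨z₀, rfl⟩ := hK
        exact huv ((h u : (Gdelta D δstar).Reachable z₀ u).symm.trans (h v))
      obtain ⟨y₀, hy₀K⟩ := hy₀
      have hM'K : ∀ x ∈ M', x ∉ K := by
        intro x hxM hxK
        obtain ⟨z₀, hz₀⟩ := id hK
        have hzw : (Gdelta D δstar).Reachable z₀ w := by rw [hz₀] at hwK; exact hwK
        have hzx : (Gdelta D δstar).Reachable z₀ x := by rw [hz₀] at hxK; exact hxK
        obtain ⟨wk⟩ := hzw.symm.trans hzx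
        obtain ⟨p, hp, q, hq, hadj, hrp⟩ := crossWalk (S := {t | t ∉ M'}) wk hw
          (fun h => h hxM)
        have hqM : q ∈ M' := not_not.mp hq
        have hpK : p ∈ K := by
          rw [hz₀]; exact hzw.trans hrp
        have h₁ : D.d p q = D.d p y₀ := hM' p hp q hqM y₀ (hsub hy₀K)
        have h₂ : D.d p y₀ = δstar := houtK K hK p hpK y₀ hy₀K
        exact hadj.2 (h₁.trans h₂)
      exact Set.Subset.antisymm hsub (fun x hx => hM'K x hx)
    have hMMsub : ∀ M'' ∈ MMax D, ∃ K, IsCompOf (Gdelta D δstar) K ∧ M'' = Kᶜ := by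
      rintro M'' ⟨hMm, hMne, hMmax⟩
      by_cases hex : ∃ K, IsCompOf (Gdelta D δstar) K ∧ M'' ⊆ Kᶜ
      · obtain ⟨K, hK, hsub⟩ := hex
        exact ⟨K, hK, hMmax Kᶜ (hKmax K hK).1 (hKmax K hK).2.1 hsub⟩
      · push_neg at hex
        exfalso
        have hmeet : ∀ K, IsCompOf (Gdelta D δstar) K → ∃ x ∈ M'', x ∈ K := by
          intro K hK
          obtain ⟨x, hx1, hx2⟩ := Set.not_subset.mp (hex K hK)
          exact ⟨x, hx1, Set.notMem_compl_iff.mp hx2⟩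
        obtain ⟨w, hw⟩ := (Set.ne_univ_iff_exists_notMem M'').mp hMne
        have hKwc : IsCompOf (Gdelta D δstar) {t | (Gdelta D δstar).Reachable w t} := ⟨w, rfl⟩
        have hK' : ∃ K', IsCompOf (Gdelta D δstar) K' ∧ w ∉ K' := by
          by_cases h : (Gdelta D δstar).Reachable u w
          · exact ⟨_, (⟨v, rfl⟩ : IsCompOf (Gdelta D δstar) {t | (Gdelta D δstar).Reachable v t}),
              fun hv' => huv (h.trans ((hv' : (Gdelta D δstar).Reachable v w)).symm)⟩
          · exact ⟨_, (⟨u, rfl⟩ : IsCompOf (Gdelta D δstar) {t | (Gdelta D δstar).Reachable u t}), h⟩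
        obtain ⟨K', hK', hwK'⟩ := hK'
        obtain ⟨x', hx'M, hx'K'⟩ := hmeet K' hK'
        have hx'Kw : ¬ (Gdelta D δstar).Reachable w x' := by
          intro h
          obtain ⟨z', hz'⟩ := hK'
          apply hwK'
          rw [hz'] at hx'K' ⊢
          exact (hx'K' : (Gdelta D δstar).Reachable z' x').trans h.symm
        have hM₂mm : IsMmodule D (M'' ∪ {t | (Gdelta D δstar).Reachable w t}ᶜ) := by
          intro z hz x hx y hy
          have hz1 : z ∉ M'' := fun h => hz (Or.inl h)
          have hz2 : (Gdelta D δstar).Reachable w z := by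
            by_contra h
            exact hz (Or.inr h)
          have hall : ∀ t, t ∈ M'' ∪ {t | (Gdelta D δstar).Reachable w t}ᶜ →
              D.d z t = δstar := by
            intro t ht
            rcases ht with htM | htc
            · have h1 : D.d z t = D.d z x' := hMm z hz1 t htM x' hx'M
              have h2 : D.d z x' = δstar := houtK _ hKwc z hz2 x' hx'Kw
              exact h1.trans h2
            · exact houtK _ hKwc z hz2 t htc
          rw [hall x hx, hall y hy]
        have hM₂ne : (M'' ∪ {t | (Gdelta D δstar).Reachable w t}ᶜ) ≠ Set.univ := by
          intro h
          have hmem : w ∈ M'' ∪ {t | (Gdelta D δstar).Reachable w t}ᶜ := h ▸ Set.mem_univ w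
          rcases hmem with h1 | h2
          · exact hw h1
          · exact h2 (SimpleGraph.Reachable.refl w)
        have hMeq := hMmax _ hM₂mm hM₂ne Set.subset_union_left
        have hKwsub : {t | (Gdelta D δstar).Reachable w t}ᶜ ⊆ M'' := by
          rw [hMeq]; exact Set.subset_union_right
        have hfin := (hKmax _ hKwc).2.2 M'' hMm hMne hKwsub
        obtain ⟨x₂, hx₂M, hx₂Kw⟩ := hmeet _ hKwc
        rw [← hfin] at hx₂M
        exact hx₂M hx₂Kw
    have hcompsEq : {K : Set X | IsCompOf (Gdelta D δstar) K} =
        ({C : Set X | IsCompOf (Glt D δstar) C} \ I) ∪ {⋃₀ I} := by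
      ext K
      constructor
      · intro hK
        obtain ⟨z, hz⟩ := hK
        have hzK : z ∈ K := by rw [hz]; exact SimpleGraph.Reachable.refl z
        by_cases hzS : z ∈ ⋃₀ I
        · right
          rw [Set.mem_singleton_iff]
          exact comp_shared (⟨z, hz⟩ : IsCompOf (Gdelta D δstar) K) hS₀comp hzK hzS
        · left
          have hClt : IsCompOf (Glt D δstar) {t | (Glt D δstar).Reachable z t} := ⟨z, rfl⟩
          have hCzI : {t | (Glt D δstar).Reachable z t} ∉ I := fun h =>
            hzS ⟨_, h, show (Glt D δstar).Reachable z z from SimpleGraph.Reachable.refl z⟩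
          have hCzd : IsCompOf (Gdelta D δstar) {t | (Glt D δstar).Reachable z t} := by
            by_contra h
            exact hCzI ((hImem _).mpr ⟨hClt, h⟩)
          have hKeq : K = {t | (Glt D δstar).Reachable z t} :=
            comp_shared (⟨z, hz⟩ : IsCompOf (Gdelta D δstar) K) hCzd hzK
              (show (Glt D δstar).Reachable z z from SimpleGraph.Reachable.refl z)
          rw [hKeq]
          exact ⟨hClt, hCzI⟩
      · rintro (⟨hlt', hnI⟩ | hKS)
        · by_contra h
          exact hnI ((hImem _).mpr ⟨hlt', h⟩)
        · rw [Set.mem_singleton_iff] at hKS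
          exact hKS ▸ hS₀comp
    have hMMeq : MMax D =
        ((fun C : Set X => Cᶜ) '' ({C : Set X | IsCompOf (Glt D δstar) C} \ I)) ∪
          {(⋃₀ I)ᶜ} := by
      have h0 : MMax D = (fun C : Set X => Cᶜ) '' {K : Set X | IsCompOf (Gdelta D δstar) K} := by
        ext M''
        constructor
        · intro h
          obtain ⟨K, hK, hMK⟩ := hMMsub M'' h
          exact ⟨K, hK, hMK.symm⟩
        · rintro ⟨K, hK, rfl⟩
          exact hKmax K hK
      rw [h0, hcompsEq, Set.image_union, Set.image_singleton]
    -- bipartite key lemma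
    have hNBS : ∀ C : Set X, IsCompOf (Glt D δstar) C →
        (∃ x ∈ C, ∃ y, y ∉ C ∧ lt x y ∧ δstar < D.d x y) →
        (∃ x ∈ C, ∃ y, y ∉ C ∧ lt y x ∧ δstar < D.d x y) → False := by
      rintro C hC ⟨x₂, hx₂, y₂, hy₂, hlt₂, hd₂⟩ ⟨x₁, hx₁, y₁, hy₁, hlt₁, hd₁⟩
      have hPC : ∀ a ∈ C, ∀ b ∈ C,
          ((Gdelta D δstar).Reachable u a ↔ (Gdelta D δstar).Reachable u b) := by
        intro a ha b hb
        have h := hmono (hreach' C hC a ha b hb)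
        exact ⟨fun ht => ht.trans h, fun ht => ht.trans h.symm⟩
      have hPy₁ : ((Gdelta D δstar).Reachable u y₁ ↔ (Gdelta D δstar).Reachable u x₁) := by
        have hadj : (Gdelta D δstar).Adj y₁ x₁ :=
          ⟨sto_ne hst hlt₁, by rw [D.symm]; exact hd₁.ne'⟩
        exact ⟨fun ht => ht.trans hadj.reachable, fun ht => ht.trans hadj.symm.reachable⟩
      have hPy₂ : ((Gdelta D δstar).Reachable u y₂ ↔ (Gdelta D δstar).Reachable u x₂) := by
        have hadj : (Gdelta D δstar).Adj y₂ x₂ :=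
          ⟨(sto_ne hst hlt₂).symm, by rw [D.symm]; exact hd₂.ne'⟩
        exact ⟨fun ht => ht.trans hadj.reachable, fun ht => ht.trans hadj.symm.reachable⟩
      obtain ⟨q₀, hq₀⟩ : ∃ q₀, ¬ ((Gdelta D δstar).Reachable u q₀ ↔
          (Gdelta D δstar).Reachable u x₁) := by
        by_cases h : (Gdelta D δstar).Reachable u x₁
        · exact ⟨v, fun hiff => huv (hiff.mpr h)⟩
        · exact ⟨u, fun hiff => h (hiff.mp (SimpleGraph.Reachable.refl u))⟩
      have hPx₁₂ := hPC x₂ hx₂ x₁ hx₁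
      have hq₀C : q₀ ∉ C := fun h => hq₀ (hPC q₀ h x₁ hx₁)
      have hcx : ∀ t, ((Gdelta D δstar).Reachable u t ↔ (Gdelta D δstar).Reachable u x₁) →
          D.d q₀ t = δstar :=
        fun t ht => hcross q₀ t (fun hiff => hq₀ (hiff.trans ht))
      have hall : (∀ c ∈ C, lt q₀ c) ∨ (∀ c ∈ C, lt c q₀) := by
        by_cases h : ∃ c ∈ C, lt c q₀
        · right
          intro c' hc'
          rcases sto_tri hst c' q₀ with h1 | rfl | h1
          · exact h1
          · exact absurd hc' hq₀C
          · obtain ⟨c, hcC, hcq⟩ := h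
            exact absurd (hint C hC c hcC c' hc' q₀ hcq h1) hq₀C
        · left
          intro c hcC
          rcases sto_tri hst q₀ c with h1 | rfl | h1
          · exact h1
          · exact absurd hcC hq₀C
          · exact absurd ⟨c, hcC, h1⟩ h
      rcases hall with hq | hq
      · rcases sto_tri hst q₀ y₁ with h1 | rfl | h1
        · have hmle : D.d y₁ x₁ ≤ D.d q₀ x₁ := d_mono hc hst (Or.inr h1) hlt₁ (Or.inl rfl)
          have he : D.d q₀ x₁ = δstar := hcx x₁ Iff.rfl
          have hs : D.d x₁ y₁ = D.d y₁ x₁ := D.symm x₁ y₁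
          linarith
        · exact hq₀ hPy₁
        · have hmle : D.d x₂ y₂ ≤ D.d q₀ y₂ :=
            d_mono hc hst (Or.inr (hq x₂ hx₂)) hlt₂ (Or.inl rfl)
          have he : D.d q₀ y₂ = δstar := hcx y₂ (hPy₂.trans hPx₁₂)
          linarith
      · rcases sto_tri hst y₂ q₀ with h1 | rfl | h1
        · have hmle : D.d x₂ y₂ ≤ D.d x₂ q₀ := d_mono hc hst (Or.inl rfl) hlt₂ (Or.inr h1)
          have he : D.d q₀ x₂ = δstar := hcx x₂ hPx₁₂
          have hs : D.d x₂ q₀ = D.d q₀ x₂ := D.symm x₂ q₀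
          linarith
        · exact hq₀ (hPy₂.trans hPx₁₂)
        · have hmle : D.d y₁ x₁ ≤ D.d y₁ q₀ :=
            d_mono hc hst (Or.inl rfl) hlt₁ (Or.inr (hq x₁ hx₁))
          have he : D.d q₀ y₁ = δstar := hcx y₁ hPy₁
          have hs1 : D.d y₁ q₀ = D.d q₀ y₁ := D.symm y₁ q₀
          have hs2 : D.d x₁ y₁ = D.d y₁ x₁ := D.symm x₁ y₁
          linarith
    -- assemble
    refine ⟨⟨hS₀comp, hdiam⟩, hMMeq, ⟨hIne, hreachBig⟩,
      {C | C ∈ I ∧ ∃ x ∈ C, ∃ y, y ∉ C ∧ lt x y ∧ δstar < D.d x y},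
      {C | C ∈ I ∧ ¬ ∃ x ∈ C, ∃ y, y ∉ C ∧ lt x y ∧ δstar < D.d x y},
      ?_, ?_, ?_, ?_⟩
    · ext C
      constructor
      · rintro (h | h)
        · exact h.1
        · exact h.1
      · intro h
        by_cases hp : ∃ x ∈ C, ∃ y, y ∉ C ∧ lt x y ∧ δstar < D.d x y
        · exact Or.inl ⟨h, hp⟩
        · exact Or.inr ⟨h, hp⟩
    · rw [Set.disjoint_left]
      rintro C ⟨h1, h2⟩ ⟨h3, h4⟩
      exact h4 h2
    · rintro C hCA C' hC'A ⟨hCI', hC'I', hne, x, hx, y, hy, hd⟩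
      have hClt : IsCompOf (Glt D δstar) C := ((hImem C).mp hCI').1
      have hC'lt : IsCompOf (Glt D δstar) C' := ((hImem C').mp hC'I').1
      have hyC : y ∉ C := fun h => hne (comp_shared hClt hC'lt h hy)
      have hxC' : x ∉ C' := fun h => hne (comp_shared hClt hC'lt hx h)
      rcases sto_tri hst x y with h | h | h
      · exact hNBS C' hC'lt hC'A.2 ⟨y, hy, x, hxC', h, by rw [D.symm]; exact hd⟩
      · exact hne (comp_shared hClt hC'lt hx (h ▸ hy))
      · exact hNBS C hClt hCA.2 ⟨x, hx, y, hyC, h, hd⟩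
    · rintro C hCB C' hC'B ⟨hCI', hC'I', hne, x, hx, y, hy, hd⟩
      have hClt : IsCompOf (Glt D δstar) C := ((hImem C).mp hCI').1
      have hC'lt : IsCompOf (Glt D δstar) C' := ((hImem C').mp hC'I').1
      have hyC : y ∉ C := fun h => hne (comp_shared hClt hC'lt h hy)
      have hxC' : x ∉ C' := fun h => hne (comp_shared hClt hC'lt hx h)
      rcases sto_tri hst x y with h | h | h
      · exact hCB.2 ⟨x, hx, y, hyC, h, hd⟩
      · exact hne (comp_shared hClt hC'lt hx (h ▸ hy))
      · exact hC'B.2 ⟨y, hy, x, hxC', h, by rw [D.symm]; exact hd⟩
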